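/- arXiv:2210.01793 — 2 statements merged into one kernel-verified Lean document; each statement's English description precedes it below -/
import Mathlib

section
/- For all integers k ≥ 3 and n ≥ 2, the class of the divisor δ in the critical group K(H_{k,n}) has additive order exactly k+n−1. -/
/-- Vertex set of the hinge graph `H_{k,n}`: two shared vertices `u, w`
(encoded as `Sum.inl 0`, `Sum.inl 1`) together with the vertices
`v_{i,j}` (encoded as `Sum.inr (i, j)`, zero-indexed). -/
abbrev HingeVertex (k n : ℕ) : Type := Fin 2 ⊕ (Fin n × Fin (k - 2))

/-- The shared vertex `u`. -/
def hu (k n : ℕ) : HingeVertex k n := Sum.inl 0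

/-- The shared vertex `w`. -/
def hw (k n : ℕ) : HingeVertex k n := Sum.inl 1

/-- The vertex `v_{i+1,j+1}` of the `i+1`-st cycle (zero-indexed here). -/
def hv (k n : ℕ) (i : Fin n) (j : Fin (k - 2)) : HingeVertex k n := Sum.inr (i, j)

/-- The base (Boolean) edge relation of the hinge graph: `u-w`, `u-v_{i,1}`,
`v_{i,j}-v_{i,j+1}`, `v_{i,k-2}-w`. -/
def hingeRelB (k n : ℕ) : HingeVertex k n → HingeVertex k n → Bool
  | Sum.inl a, Sum.inl b => a != b
  | Sum.inl a, Sum.inr p => a == 0 && p.2.val == 0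
  | Sum.inr p, Sum.inl b => b == 1 && p.2.val == k - 3
  | Sum.inr p, Sum.inr q => p.1 == q.1 && q.2.val == p.2.val + 1

/-- The hinge graph `H_{k,n}`: `n` cycles of length `k` glued along the edge `{u, w}`. -/
def Hinge (k n : ℕ) : SimpleGraph (HingeVertex k n) :=
  SimpleGraph.fromRel (fun x y => hingeRelB k n x y = true)

instance (k n : ℕ) : DecidableRel (Hinge k n).Adj := fun x y =>
  inferInstanceAs (Decidable (x ≠ y ∧ (hingeRelB k n x y = true ∨ hingeRelB k n y x = true)))

/-- The number of spanning trees of a graph `G`: the number of edge sets `s ⊆ E(G)`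
whose associated spanning subgraph (on all of `V`) is connected and acyclic. -/
noncomputable def spanningTreeCount {V : Type*} (G : SimpleGraph V) : ℕ :=
  Set.ncard {s : Set (Sym2 V) | s ⊆ G.edgeSet ∧ (SimpleGraph.fromEdgeSet s).IsTree}

/-- The degree homomorphism on divisors. -/
def degHom (V : Type*) [Fintype V] : (V → ℤ) →+ ℤ where
  toFun D := ∑ v, D v
  map_zero' := by simp
  map_add' x y := by simp [Finset.sum_add_distrib]

/-- The group `Div⁰` of degree-zero divisors. -/
def Div0 (V : Type*) [Fintype V] : AddSubgroup (V → ℤ) := (degHom V).ker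

/-- The group of principal divisors: the image of the Laplacian `L = Deg - A`. -/
def Prin {V : Type*} [Fintype V] [DecidableEq V] (G : SimpleGraph V) [DecidableRel G.Adj] :
    AddSubgroup (V → ℤ) :=
  AddMonoidHom.range (Matrix.mulVecLin (G.lapMatrix ℤ)).toAddMonoidHom

/-- The critical group `K(G) = Div⁰(G) / Prin(G)`. -/
def CriticalGroup {V : Type*} [Fintype V] [DecidableEq V] (G : SimpleGraph V)
    [DecidableRel G.Adj] : Type _ :=
  Div0 V ⧸ ((Prin G).addSubgroupOf (Div0 V))

noncomputable instance {V : Type*} [Fintype V] [DecidableEq V] (G : SimpleGraph V)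
    [DecidableRel G.Adj] : AddCommGroup (CriticalGroup G) :=
  inferInstanceAs (AddCommGroup (Div0 V ⧸ ((Prin G).addSubgroupOf (Div0 V))))

/-- The class of a degree-zero divisor in the critical group. -/
def divisorClass {V : Type*} [Fintype V] [DecidableEq V] (G : SimpleGraph V)
    [DecidableRel G.Adj] (D : V → ℤ) (hD : D ∈ Div0 V) : CriticalGroup G :=
  (QuotientAddGroup.mk (⟨D, hD⟩ : Div0 V) :
    Div0 V ⧸ ((Prin G).addSubgroupOf (Div0 V)))

/-- The divisor with value `1` at `x`, `-1` at `y` (for `x ≠ y`) and `0` elsewhere. -/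
def pointDiff {V : Type*} [DecidableEq V] (x y : V) : V → ℤ :=
  fun z => (if z = x then 1 else 0) - (if z = y then 1 else 0)

lemma pointDiff_mem {V : Type*} [Fintype V] [DecidableEq V] (x y : V) :
    pointDiff x y ∈ Div0 V := by
  simp [Div0, AddMonoidHom.mem_ker, degHom, pointDiff, Finset.sum_sub_distrib]


open Finset Matrix in
lemma lap_apply {V : Type*} [Fintype V] [DecidableEq V] (G : SimpleGraph V)
    [DecidableRel G.Adj] (x : V → ℤ) (v : V) :
    (G.lapMatrix ℤ *ᵥ x) v = ∑ u, if G.Adj v u then (x v - x u) else 0 := by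
  have h1 : (Finset.univ.filter (fun u => G.Adj v u)) = G.neighborFinset v := by
    ext u; simp [SimpleGraph.mem_neighborFinset]
  rw [SimpleGraph.lapMatrix_mulVec_apply, ← Finset.sum_filter, h1,
    Finset.sum_sub_distrib, Finset.sum_const, SimpleGraph.card_neighborFinset_eq_degree]
  push_cast
  ring

lemma adj_ll {k n : ℕ} (a b : Fin 2) :
    (Hinge k n).Adj (Sum.inl a) (Sum.inl b) ↔ a ≠ b := by
  simp [Hinge, SimpleGraph.fromRel_adj, hingeRelB, bne_iff_ne, ne_comm]

lemma adj_lr {k n : ℕ} (a : Fin 2) (p : Fin n × Fin (k-2)) :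
    (Hinge k n).Adj (Sum.inl a) (Sum.inr p) ↔
      (a = 0 ∧ p.2.val = 0) ∨ (a = 1 ∧ p.2.val = k - 3) := by
  simp [Hinge, SimpleGraph.fromRel_adj, hingeRelB]

lemma adj_rl {k n : ℕ} (a : Fin 2) (p : Fin n × Fin (k-2)) :
    (Hinge k n).Adj (Sum.inr p) (Sum.inl a) ↔
      (a = 0 ∧ p.2.val = 0) ∨ (a = 1 ∧ p.2.val = k - 3) := by
  rw [SimpleGraph.adj_comm, adj_lr]

lemma adj_rr {k n : ℕ} (p q : Fin n × Fin (k-2)) :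
    (Hinge k n).Adj (Sum.inr p) (Sum.inr q) ↔
      p.1 = q.1 ∧ (q.2.val = p.2.val + 1 ∨ p.2.val = q.2.val + 1) := by
  simp only [Hinge, SimpleGraph.fromRel_adj, hingeRelB, Bool.and_eq_true, beq_iff_eq,
    ne_eq, Sum.inr.injEq]
  constructor
  · rintro ⟨hne, h | h⟩
    · exact ⟨h.1, Or.inl h.2⟩
    · exact ⟨h.1.symm, Or.inr h.2⟩
  · rintro ⟨h1, h2 | h2⟩
    · refine ⟨fun he => by rw [he] at h2; omega, Or.inl ⟨h1, h2⟩⟩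
    · refine ⟨fun he => by rw [he] at h2; omega, Or.inr ⟨h1.symm, h2⟩⟩

lemma sum_ite_val {m a : ℕ} (f : Fin m → ℤ) :
    (∑ j : Fin m, if j.val = a then f j else 0) = if h : a < m then f ⟨a, h⟩ else 0 := by
  split
  next h =>
    rw [Finset.sum_eq_single (⟨a, h⟩ : Fin m)]
    · simp
    · intro b _ hb; rw [if_neg]; intro hv; exact hb (Fin.ext hv)
    · simp
  next h =>
    apply Finset.sum_eq_zero; intro j _; rw [if_neg]; intro hv; exact h (hv ▸ j.isLt)

lemma sum_ite_val' {m a : ℕ} (f : Fin m → ℤ) :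
    (∑ j : Fin m, if a = j.val + 1 then f j else 0) =
      if h : a - 1 < m ∧ 1 ≤ a then f ⟨a - 1, h.1⟩ else 0 := by
  have : ∀ j : Fin m, (a = j.val + 1) ↔ (j.val = a - 1 ∧ 1 ≤ a) := by
    intro j; omega
  simp_rw [this]
  split
  next h =>
    rw [Finset.sum_eq_single (⟨a - 1, h.1⟩ : Fin m)]
    · simp [h.2]
    · intro b _ hb; rw [if_neg]; rintro ⟨hv, -⟩; exact hb (Fin.ext hv)
    · simp
  next h =>
    apply Finset.sum_eq_zero; intro j _; rw [if_neg]; rintro ⟨hv, ha⟩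
    exact h ⟨hv ▸ j.isLt, ha⟩

lemma ite_or_add {A B : Prop} [Decidable A] [Decidable B] (h : ¬(A ∧ B)) (f : ℤ) :
    (if A ∨ B then f else 0) = (if A then f else 0) + (if B then f else 0) := by
  by_cases hA : A <;> by_cases hB : B <;> simp_all

open Matrix in
lemma row_u {k n : ℕ} (hk : 3 ≤ k) (x : HingeVertex k n → ℤ) :
    ((Hinge k n).lapMatrix ℤ *ᵥ x) (Sum.inl 0) =
      (x (Sum.inl 0) - x (Sum.inl 1))
        + ∑ i : Fin n, (x (Sum.inl 0) - x (Sum.inr (i, ⟨0, by omega⟩))) := by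
  rw [lap_apply, Fintype.sum_sum_type, Fin.sum_univ_two]
  simp only [adj_ll, adj_lr]
  norm_num
  rw [Fintype.sum_prod_type]
  have h0 : ∀ i : Fin n, (∑ j : Fin (k-2), if (j:ℕ) = 0 then
      x (Sum.inl 0) - x (Sum.inr (i, j)) else 0)
      = x (Sum.inl 0) - x (Sum.inr (i, ⟨0, by omega⟩)) := fun i => by
    rw [sum_ite_val, dif_pos (by omega)]
  simp_rw [h0]
  rw [Finset.sum_sub_distrib, Finset.sum_const, Finset.card_univ, Fintype.card_fin]
  push_cast
  ring

open Matrix in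
lemma row_w {k n : ℕ} (hk : 3 ≤ k) (x : HingeVertex k n → ℤ) :
    ((Hinge k n).lapMatrix ℤ *ᵥ x) (Sum.inl 1) =
      (x (Sum.inl 1) - x (Sum.inl 0))
        + ∑ i : Fin n, (x (Sum.inl 1) - x (Sum.inr (i, ⟨k - 3, by omega⟩))) := by
  rw [lap_apply, Fintype.sum_sum_type, Fin.sum_univ_two]
  simp only [adj_ll, adj_lr]
  norm_num
  rw [Fintype.sum_prod_type]
  have h0 : ∀ i : Fin n, (∑ j : Fin (k-2), if (j:ℕ) = k - 3 then
      x (Sum.inl 1) - x (Sum.inr (i, j)) else 0)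
      = x (Sum.inl 1) - x (Sum.inr (i, ⟨k - 3, by omega⟩)) := fun i => by
    rw [sum_ite_val, dif_pos (by omega)]
  simp_rw [h0]
  rw [Finset.sum_sub_distrib, Finset.sum_const, Finset.card_univ, Fintype.card_fin]
  push_cast
  ring

open Matrix in
lemma row_v {k n : ℕ} (hk : 3 ≤ k) (x : HingeVertex k n → ℤ) (i : Fin n)
    (t : ℕ) (ht : t < k - 2) :
    ((Hinge k n).lapMatrix ℤ *ᵥ x) (Sum.inr (i, ⟨t, ht⟩)) =
      (x (Sum.inr (i, ⟨t, ht⟩)) -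
        (if h0 : t = 0 then x (Sum.inl 0) else x (Sum.inr (i, ⟨t - 1, by omega⟩))))
      + (x (Sum.inr (i, ⟨t, ht⟩)) -
        (if hl : t = k - 3 then x (Sum.inl 1) else x (Sum.inr (i, ⟨t + 1, by omega⟩)))) := by
  rw [lap_apply, Fintype.sum_sum_type, Fin.sum_univ_two]
  simp only [adj_rl, adj_rr]
  norm_num
  rw [Fintype.sum_prod_type]
  rw [Finset.sum_eq_single i]
  rotate_left
  · intro b _ hb
    apply Finset.sum_eq_zero; intro j _
    rw [if_neg]; rintro ⟨hib, -⟩; exact hb hib.symm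
  · simp
  have hsplit : ∀ y : Fin (k - 2),
      (if (i = (i, y).1 ∧ (((i, y).2 : ℕ) = t + 1 ∨ t = ((i, y).2 : ℕ) + 1)) then
        x (Sum.inr (i, ⟨t, ht⟩)) - x (Sum.inr (i, y)) else 0)
      = (if (y : ℕ) = t + 1 then x (Sum.inr (i, ⟨t, ht⟩)) - x (Sum.inr (i, y)) else 0)
        + (if t = (y : ℕ) + 1 then x (Sum.inr (i, ⟨t, ht⟩)) - x (Sum.inr (i, y)) else 0) := by
    intro y
    rw [if_congr (show (i = (i, y).1 ∧ (((i, y).2 : ℕ) = t + 1 ∨ t = ((i, y).2 : ℕ) + 1))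
      ↔ ((y : ℕ) = t + 1 ∨ t = (y : ℕ) + 1) by simp) rfl rfl]
    exact ite_or_add (by omega) _
  rw [show (∑ y : Fin (k - 2), if (i = (i, y).1 ∧ (((i, y).2 : ℕ) = t + 1 ∨ t = ((i, y).2 : ℕ) + 1)) then
        x (Sum.inr (i, ⟨t, ht⟩)) - x (Sum.inr (i, y)) else 0)
      = ∑ y : Fin (k - 2), ((if (y : ℕ) = t + 1 then x (Sum.inr (i, ⟨t, ht⟩)) - x (Sum.inr (i, y)) else 0)
        + (if t = (y : ℕ) + 1 then x (Sum.inr (i, ⟨t, ht⟩)) - x (Sum.inr (i, y)) else 0))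
    from Finset.sum_congr rfl fun y _ => hsplit y]
  rw [Finset.sum_add_distrib, sum_ite_val, sum_ite_val']
  split_ifs <;> (try (exfalso; omega)) <;> ring

def x0 (k n : ℕ) : HingeVertex k n → ℤ
  | Sum.inl a => if a = 0 then (k : ℤ) - 1 else 0
  | Sum.inr p => (k : ℤ) - 2 - p.2.val

open Matrix in
lemma lap_x0 {k n : ℕ} (hk : 3 ≤ k) :
    (Hinge k n).lapMatrix ℤ *ᵥ (x0 k n) =
      fun v => ((k + n - 1 : ℕ) : ℤ) * pointDiff (hu k n) (hw k n) v := by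
  funext v
  rcases v with a | ⟨i, j⟩
  · fin_cases a
    · show ((Hinge k n).lapMatrix ℤ *ᵥ (x0 k n)) (Sum.inl 0)
        = ((k + n - 1 : ℕ) : ℤ) * pointDiff (hu k n) (hw k n) (Sum.inl 0)
      rw [row_u hk]
      have hp : pointDiff (hu k n) (hw k n) (Sum.inl 0) = 1 := by
        simp [pointDiff, hu, hw]
      rw [hp, mul_one]
      simp only [x0]
      simp [Finset.sum_const]
      omega
    · show ((Hinge k n).lapMatrix ℤ *ᵥ (x0 k n)) (Sum.inl 1)
        = ((k + n - 1 : ℕ) : ℤ) * pointDiff (hu k n) (hw k n) (Sum.inl 1)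
      rw [row_w hk]
      have hp : pointDiff (hu k n) (hw k n) (Sum.inl 1) = -1 := by
        simp [pointDiff, hu, hw]
      rw [hp]
      simp only [x0]
      simp [Finset.sum_const]
      rw [show ((k - 3 : ℕ) : ℤ) = (k : ℤ) - 3 from by omega,
        show ((k + n - 1 : ℕ) : ℤ) = (k : ℤ) + (n : ℤ) - 1 from by omega]
      ring
  · obtain ⟨t, ht⟩ := j
    rw [row_v hk]
    have hp : pointDiff (hu k n) (hw k n) (Sum.inr (i, ⟨t, ht⟩)) = 0 := by
      simp [pointDiff, hu, hw]
    rw [hp, mul_zero]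
    split_ifs with h1 h2 h2 <;> simp [x0] <;> omega

open Matrix in
lemma key_dvd {k n : ℕ} (hk : 3 ≤ k) (hn : 2 ≤ n) (m : ℤ) (x : HingeVertex k n → ℤ)
    (hx : (Hinge k n).lapMatrix ℤ *ᵥ x =
      fun v => m * pointDiff (hu k n) (hw k n) v) :
    ((k + n - 1 : ℕ) : ℤ) ∣ m := by
  have hn1 : 0 < n := by omega
  have hk2 : 0 < k - 2 := by omega
  have hzero : ∀ (i : Fin n) (t : ℕ) (h : t < k - 2),
      ((Hinge k n).lapMatrix ℤ *ᵥ x) (Sum.inr (i, ⟨t, h⟩)) = 0 := by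
    intro i t h
    rw [hx]
    simp [pointDiff, hu, hw]
  -- linearity along each path
  have lin : ∀ t, ∀ h : t < k - 2, ∀ i : Fin n,
      (x (Sum.inr (i, ⟨t, h⟩)) = x (Sum.inl 0)
        + ((t : ℤ) + 1) * (x (Sum.inr (i, ⟨0, hk2⟩)) - x (Sum.inl 0))) ∧
      (∀ h' : t + 1 < k - 2, x (Sum.inr (i, ⟨t + 1, h'⟩)) = x (Sum.inl 0)
        + ((t : ℤ) + 2) * (x (Sum.inr (i, ⟨0, hk2⟩)) - x (Sum.inl 0))) := by
    intro t
    induction t with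
    | zero =>
      intro h i
      constructor
      · have he : x (Sum.inr (i, (⟨0, h⟩ : Fin (k - 2))))
            = x (Sum.inr (i, (⟨0, hk2⟩ : Fin (k - 2)))) := rfl
        rw [he]; push_cast; ring
      · intro h'
        have hrow : (0 : ℤ) = (x (Sum.inr (i, ⟨0, h⟩)) - x (Sum.inl 0)) +
            (x (Sum.inr (i, ⟨0, h⟩)) - x (Sum.inr (i, ⟨0 + 1, h'⟩))) := by
          have h1 := row_v hk x i 0 h
          rw [hzero i 0 h, dif_pos rfl, dif_neg (show ¬(0 : ℕ) = k - 3 by omega)] at h1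
          exact h1
        have he : x (Sum.inr (i, (⟨0, h⟩ : Fin (k - 2))))
            = x (Sum.inr (i, (⟨0, hk2⟩ : Fin (k - 2)))) := rfl
        rw [he] at hrow
        push_cast
        linarith [hrow]
    | succ s IH =>
      intro h i
      have hs : s < k - 2 := by omega
      obtain ⟨ih1, ih2⟩ := IH hs i
      have hfst := ih2 h
      constructor
      · rw [hfst]; push_cast; ring
      · intro h'
        have hrow : (0 : ℤ) = (x (Sum.inr (i, ⟨s + 1, h⟩)) - x (Sum.inr (i, ⟨s, hs⟩))) +
            (x (Sum.inr (i, ⟨s + 1, h⟩)) - x (Sum.inr (i, ⟨s + 1 + 1, h'⟩))) := by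
          have h1 := row_v hk x i (s + 1) h
          rw [hzero i (s + 1) h, dif_neg (show ¬ s + 1 = 0 by omega),
            dif_neg (show ¬ s + 1 = k - 3 by omega)] at h1
          exact h1
        push_cast
        push_cast at ih1 hfst
        linarith [hrow, ih1, hfst]
  -- the last vertex gives b = a + (k-1) d i
  have hlast : ∀ i : Fin n, x (Sum.inl 1) = x (Sum.inl 0)
      + ((k : ℤ) - 1) * (x (Sum.inr (i, ⟨0, hk2⟩)) - x (Sum.inl 0)) := by
    intro i
    have h3 : k - 3 < k - 2 := by omega
    by_cases hk3 : k - 3 = 0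
    · have hrow : (0 : ℤ) = (x (Sum.inr (i, ⟨k - 3, h3⟩)) - x (Sum.inl 0)) +
          (x (Sum.inr (i, ⟨k - 3, h3⟩)) - x (Sum.inl 1)) := by
        have h1 := row_v hk x i (k - 3) h3
        rw [hzero i (k - 3) h3, dif_pos hk3, dif_pos rfl] at h1
        exact h1
      have hIs : x (Sum.inr (i, ⟨k - 3, h3⟩)) = x (Sum.inl 0)
          + (1 : ℤ) * (x (Sum.inr (i, ⟨0, hk2⟩)) - x (Sum.inl 0)) := by
        rw [(lin (k - 3) h3 i).1, show ((k - 3 : ℕ) : ℤ) = 0 from by omega]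
        ring
      rw [show (k : ℤ) = 3 from by omega]
      linarith [hrow, hIs]
    · have h4 : k - 3 - 1 < k - 2 := by omega
      have hrow : (0 : ℤ) = (x (Sum.inr (i, ⟨k - 3, h3⟩)) - x (Sum.inr (i, ⟨k - 3 - 1, h4⟩))) +
          (x (Sum.inr (i, ⟨k - 3, h3⟩)) - x (Sum.inl 1)) := by
        have h1 := row_v hk x i (k - 3) h3
        rw [hzero i (k - 3) h3, dif_neg hk3, dif_pos rfl] at h1
        exact h1
      have hIs : x (Sum.inr (i, ⟨k - 3, h3⟩)) = x (Sum.inl 0)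
          + ((k : ℤ) - 2) * (x (Sum.inr (i, ⟨0, hk2⟩)) - x (Sum.inl 0)) := by
        rw [(lin (k - 3) h3 i).1, show ((k - 3 : ℕ) : ℤ) = (k : ℤ) - 3 from by omega]
        ring
      have hIp : x (Sum.inr (i, ⟨k - 3 - 1, h4⟩)) = x (Sum.inl 0)
          + ((k : ℤ) - 3) * (x (Sum.inr (i, ⟨0, hk2⟩)) - x (Sum.inl 0)) := by
        rw [(lin (k - 3 - 1) h4 i).1, show ((k - 3 - 1 : ℕ) : ℤ) = (k : ℤ) - 4 from by omega]
        ring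
      linarith [hrow, hIs, hIp]
  -- all slopes are equal
  set D : Fin n → ℤ := fun i => x (Sum.inr (i, ⟨0, hk2⟩)) - x (Sum.inl 0) with hD
  have hdeq : ∀ i : Fin n, D i = D ⟨0, hn1⟩ := by
    intro i
    have h1 := hlast i
    have h2 := hlast ⟨0, hn1⟩
    have hkc : (3 : ℤ) ≤ (k : ℤ) := by exact_mod_cast hk
    have hkne : (k : ℤ) - 1 ≠ 0 := by omega
    have hmul : ((k : ℤ) - 1) * D i = ((k : ℤ) - 1) * D ⟨0, hn1⟩ := by
      simp only [hD]
      linarith [h1, h2]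
    exact mul_left_cancel₀ hkne hmul
  -- the row at u
  have hrowu := row_u hk x
  rw [hx] at hrowu
  simp only at hrowu
  have hp : pointDiff (hu k n) (hw k n) (Sum.inl 0) = 1 := by simp [pointDiff, hu, hw]
  rw [hp, mul_one] at hrowu
  have hsum : ∀ i : Fin n, x (Sum.inl 0) - x (Sum.inr (i, ⟨0, by omega⟩)) = - D ⟨0, hn1⟩ := by
    intro i
    have h1 := hdeq i
    simp only [hD] at h1 ⊢
    linarith [h1]
  rw [Finset.sum_congr rfl (fun i _ => hsum i), Finset.sum_const, Finset.card_univ,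
    Fintype.card_fin, nsmul_eq_mul] at hrowu
  refine ⟨- D ⟨0, hn1⟩, ?_⟩
  rw [show ((k + n - 1 : ℕ) : ℤ) = (k : ℤ) + (n : ℤ) - 1 from by omega]
  have hb0 := hlast ⟨0, hn1⟩
  simp only [hD] at hb0 hrowu ⊢
  linarith [hb0, hrowu]

open Matrix in
/-- For all integers `k ≥ 3` and `n ≥ 2`, the class of the divisor `δ`
(value `1` at `u`, `-1` at `w`, `0` elsewhere) in the critical group `K(H_{k,n})` has
additive order exactly `k + n - 1`. -/
theorem hinge_delta_addOrderOf (k n : ℕ) (hk : 3 ≤ k) (hn : 2 ≤ n) :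
    addOrderOf (divisorClass (Hinge k n)
      (pointDiff (hu k n) (hw k n)) (pointDiff_mem _ _)) = k + n - 1 := by
  set c := divisorClass (Hinge k n) (pointDiff (hu k n) (hw k n)) (pointDiff_mem _ _) with hc
  have hiff : ∀ m : ℕ, m • c = 0 ↔ (k + n - 1) ∣ m := by
    intro m
    have hq : m • c = (QuotientAddGroup.mk
        (m • (⟨pointDiff (hu k n) (hw k n), pointDiff_mem _ _⟩ : Div0 (HingeVertex k n))) :
        Div0 (HingeVertex k n) ⧸ ((Prin (Hinge k n)).addSubgroupOf (Div0 (HingeVertex k n)))) := by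
      rw [hc]
      rfl
    rw [hq]
    refine (QuotientAddGroup.eq_zero_iff _).trans ?_
    rw [AddSubgroup.mem_addSubgroupOf]
    simp only [Prin, AddMonoidHom.mem_range, LinearMap.toAddMonoidHom_coe, Matrix.mulVecLin_apply]
    constructor
    · rintro ⟨y, hy⟩
      have hy' : (Hinge k n).lapMatrix ℤ *ᵥ y = m • pointDiff (hu k n) (hw k n) := hy
      have hkey := key_dvd hk hn (m : ℤ) y ?_
      · exact_mod_cast hkey
      · funext v
        rw [hy']
        simp [nsmul_eq_mul]
    · rintro ⟨q, rfl⟩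
      refine ⟨fun v => (q : ℤ) * x0 k n v, ?_⟩
      show (Hinge k n).lapMatrix ℤ *ᵥ (fun v => (q : ℤ) * x0 k n v)
        = ((k + n - 1) * q) • pointDiff (hu k n) (hw k n)
      have hl : (Hinge k n).lapMatrix ℤ *ᵥ (fun v => (q : ℤ) * x0 k n v)
          = fun v => (q : ℤ) * (((Hinge k n).lapMatrix ℤ *ᵥ x0 k n) v) := by
        rw [show (fun v => (q : ℤ) * x0 k n v) = (q : ℤ) • x0 k n from rfl,
          Matrix.mulVec_smul]
        rfl
      rw [hl, lap_x0 hk]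
      funext v
      simp [nsmul_eq_mul]
      push_cast
      ring
  have h1 : addOrderOf c ∣ (k + n - 1) :=
    addOrderOf_dvd_of_nsmul_eq_zero ((hiff _).mpr dvd_rfl)
  have h2 : (k + n - 1) ∣ addOrderOf c := (hiff _).mp (addOrderOf_nsmul_eq_zero c)
  exact Nat.dvd_antisymm h1 h2
end

section
/- For all integers k ≥ 3 and n ≥ 2, and any index i with 1 ≤ i ≤ n, the class of the divisor ε_i in the critical group K(H_{k,n}) has additive order exactly (k−1)·(k+n−1). -/
section HingeAux
open Finset Matrix
variable {k n : ℕ}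


lemma adj_ul_ur : (Hinge k n).Adj (Sum.inl 0) (Sum.inl 1) := by
  constructor
  · simp
  · left; rfl

lemma adj_inl0_iff (p : Fin n × Fin (k-2)) :
    (Hinge k n).Adj (Sum.inl 0) (Sum.inr p) ↔ (p.2 : ℕ) = 0 := by
  simp only [Hinge, SimpleGraph.fromRel_adj, hingeRelB]
  simp [Fin.ext_iff]

lemma adj_inl1_iff (hk : 3 ≤ k) (p : Fin n × Fin (k-2)) :
    (Hinge k n).Adj (Sum.inl 1) (Sum.inr p) ↔ (p.2 : ℕ) = k - 3 := by
  simp only [Hinge, SimpleGraph.fromRel_adj, hingeRelB]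
  simp [Fin.ext_iff]

lemma adj_inl_inl_iff (a b : Fin 2) :
    (Hinge k n).Adj (Sum.inl a) (Sum.inl b) ↔ a ≠ b := by
  simp only [Hinge, SimpleGraph.fromRel_adj, hingeRelB]
  constructor
  · rintro ⟨h, -⟩ hab; exact h (by rw [hab])
  · intro h; exact ⟨by simpa using h, Or.inl (by simpa using h)⟩

lemma adj_inr_inl0_iff (p : Fin n × Fin (k-2)) :
    (Hinge k n).Adj (Sum.inr p) (Sum.inl 0) ↔ (p.2 : ℕ) = 0 := by
  rw [SimpleGraph.adj_comm]; exact adj_inl0_iff p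

lemma adj_inr_inl1_iff (hk : 3 ≤ k) (p : Fin n × Fin (k-2)) :
    (Hinge k n).Adj (Sum.inr p) (Sum.inl 1) ↔ (p.2 : ℕ) = k - 3 := by
  rw [SimpleGraph.adj_comm]; exact adj_inl1_iff hk p

lemma adj_inr_inr_iff (p q : Fin n × Fin (k-2)) :
    (Hinge k n).Adj (Sum.inr p) (Sum.inr q) ↔
      p.1 = q.1 ∧ ((q.2 : ℕ) = (p.2 : ℕ) + 1 ∨ (p.2 : ℕ) = (q.2 : ℕ) + 1) := by
  simp only [Hinge, SimpleGraph.fromRel_adj, hingeRelB]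
  constructor
  · rintro ⟨-, h | h⟩ <;>
      simp only [Bool.and_eq_true, beq_iff_eq] at h
    · exact ⟨h.1, Or.inl h.2⟩
    · exact ⟨h.1.symm, Or.inr h.2⟩
  · rintro ⟨h1, h2⟩
    have hne : p ≠ q := by
      intro he; subst he; omega
    refine ⟨by simpa using hne, ?_⟩
    rcases h2 with h2 | h2
    · left; simp [h1, h2]
    · right; simp [h1.symm, h2]

lemma sum_fin_eqc {m : ℕ} (c : ℕ) (f : Fin m → ℤ) :
    ∑ j : Fin m, (if (j:ℕ) = c then f j else 0) = if h : c < m then f ⟨c,h⟩ else 0 := by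
  split
  next h =>
    rw [Finset.sum_eq_single (⟨c,h⟩ : Fin m)]
    · simp
    · intro b _ hb; rw [if_neg]; simpa [Fin.ext_iff] using hb
    · simp
  next h =>
    apply Finset.sum_eq_zero; intro j _
    have := j.isLt
    exact if_neg (by omega)

lemma lap_eq_sum {V : Type*} [Fintype V] [DecidableEq V] (G : SimpleGraph V)
    [DecidableRel G.Adj] (x : V → ℤ) (v : V) :
    (G.lapMatrix ℤ *ᵥ x) v = ∑ y, if G.Adj v y then x v - x y else 0 := by
  rw [SimpleGraph.lapMatrix_mulVec_apply, ← Finset.sum_filter]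
  have h1 : (Finset.univ.filter (fun a => G.Adj v a)) = G.neighborFinset v := by
    ext y; simp [SimpleGraph.neighborFinset_def]
  rw [h1, Finset.sum_sub_distrib, Finset.sum_const, SimpleGraph.card_neighborFinset_eq_degree]
  rw [nsmul_eq_mul, mul_comm]

lemma lap_apply_u (hk : 3 ≤ k) (x : HingeVertex k n → ℤ) :
    ((Hinge k n).lapMatrix ℤ *ᵥ x) (Sum.inl 0) =
      (x (Sum.inl 0) - x (Sum.inl 1)) +
      ∑ i' : Fin n, (x (Sum.inl 0) - x (Sum.inr (i', ⟨0, Nat.sub_pos_of_lt hk⟩))) := by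
  rw [lap_eq_sum, Fintype.sum_sum_type, Fin.sum_univ_two]
  rw [if_neg (SimpleGraph.irrefl _), if_pos adj_ul_ur, zero_add]
  congr 1
  rw [Fintype.sum_prod_type]
  refine Finset.sum_congr rfl fun i' _ => ?_
  have : ∀ j : Fin (k-2), (if (Hinge k n).Adj (Sum.inl 0) (Sum.inr (i', j)) then
      x (Sum.inl 0) - x (Sum.inr (i', j)) else 0)
      = (if (j:ℕ) = 0 then x (Sum.inl 0) - x (Sum.inr (i', j)) else 0) := by
    intro j; rw [if_congr (adj_inl0_iff (i', j)) rfl rfl]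
  rw [Finset.sum_congr rfl fun j _ => this j,
      sum_fin_eqc 0 (fun j => x (Sum.inl 0) - x (Sum.inr (i', j))), dif_pos]

lemma lap_apply_w (hk : 3 ≤ k) (x : HingeVertex k n → ℤ) :
    ((Hinge k n).lapMatrix ℤ *ᵥ x) (Sum.inl 1) =
      (x (Sum.inl 1) - x (Sum.inl 0)) +
      ∑ i' : Fin n, (x (Sum.inl 1) - x (Sum.inr (i', ⟨k-3, by omega⟩))) := by
  rw [lap_eq_sum, Fintype.sum_sum_type, Fin.sum_univ_two]
  rw [if_pos ((adj_inl_inl_iff 1 0).2 (by decide)), if_neg (SimpleGraph.irrefl _), add_zero]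
  congr 1
  rw [Fintype.sum_prod_type]
  refine Finset.sum_congr rfl fun i' _ => ?_
  have : ∀ j : Fin (k-2), (if (Hinge k n).Adj (Sum.inl 1) (Sum.inr (i', j)) then
      x (Sum.inl 1) - x (Sum.inr (i', j)) else 0)
      = (if (j:ℕ) = k-3 then x (Sum.inl 1) - x (Sum.inr (i', j)) else 0) := by
    intro j; rw [if_congr (adj_inl1_iff hk (i', j)) rfl rfl]
  rw [Finset.sum_congr rfl fun j _ => this j,
      sum_fin_eqc (k-3) (fun j => x (Sum.inl 1) - x (Sum.inr (i', j))), dif_pos (by omega)]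

lemma lap_apply_v (hk : 3 ≤ k) (x : HingeVertex k n → ℤ) (i' : Fin n) (j : Fin (k-2)) :
    ((Hinge k n).lapMatrix ℤ *ᵥ x) (Sum.inr (i', j)) =
      (if (j:ℕ) = 0 then x (Sum.inr (i',j)) - x (Sum.inl 0) else 0)
      + (if (j:ℕ) = k - 3 then x (Sum.inr (i',j)) - x (Sum.inl 1) else 0)
      + (if h : (j:ℕ)+1 < k-2 then
          x (Sum.inr (i',j)) - x (Sum.inr (i', ⟨(j:ℕ)+1, h⟩)) else 0)
      + (if (j:ℕ) ≠ 0 then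
          x (Sum.inr (i',j)) - x (Sum.inr (i', ⟨(j:ℕ)-1,
            Nat.lt_of_le_of_lt (Nat.sub_le _ _) j.isLt⟩)) else 0) := by
  set f : HingeVertex k n → ℤ := fun y => x (Sum.inr (i',j)) - x y with hf
  rw [lap_eq_sum, Fintype.sum_sum_type, Fin.sum_univ_two]
  rw [if_congr (adj_inr_inl0_iff (i',j)) rfl rfl, if_congr (adj_inr_inl1_iff hk (i',j)) rfl rfl]
  rw [add_assoc, add_assoc, add_assoc]
  congr 2
  rw [Fintype.sum_prod_type]
  -- outer sum over i'' : only i'' = i' contributes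
  rw [Finset.sum_eq_single i' ?h1 (by simp)]
  case h1 =>
    intro i'' _ hne
    apply Finset.sum_eq_zero; intro j'' _
    rw [if_neg]
    rw [adj_inr_inr_iff]
    rintro ⟨h1, -⟩; exact hne h1.symm
  -- now inner sum at i'' = i'
  have step1 : ∀ j'' : Fin (k-2),
      (if (Hinge k n).Adj (Sum.inr (i', j)) (Sum.inr (i', j'')) then f (Sum.inr (i', j'')) else 0)
      = (if (j'':ℕ) = (j:ℕ)+1 then f (Sum.inr (i', j'')) else 0)
        + (if (j:ℕ) = (j'':ℕ)+1 then f (Sum.inr (i', j'')) else 0) := by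
    intro j''
    rw [if_congr (adj_inr_inr_iff (i',j) (i',j'')) rfl rfl]
    by_cases h1 : (j'':ℕ) = (j:ℕ)+1 <;> by_cases h2 : (j:ℕ) = (j'':ℕ)+1
    · omega
    · rw [if_pos ⟨rfl, Or.inl h1⟩, if_pos h1, if_neg h2, add_zero]
    · rw [if_pos ⟨rfl, Or.inr h2⟩, if_neg h1, if_pos h2, zero_add]
    · rw [if_neg (by rintro ⟨-, h | h⟩ <;> [exact h1 h; exact h2 h]), if_neg h1, if_neg h2,
        add_zero]
  rw [Finset.sum_congr rfl fun j'' _ => step1 j'', Finset.sum_add_distrib]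
  congr 1
  · rw [sum_fin_eqc ((j:ℕ)+1) (fun j'' => f (Sum.inr (i', j'')))]
  · by_cases hj0 : (j:ℕ) = 0
    · rw [if_neg (by omega)]
      apply Finset.sum_eq_zero; intro j'' _
      exact if_neg (by omega)
    · rw [if_pos hj0]
      have : ∀ j'' : Fin (k-2), (if (j:ℕ) = (j'':ℕ)+1 then f (Sum.inr (i', j'')) else 0)
          = (if (j'':ℕ) = (j:ℕ)-1 then f (Sum.inr (i', j'')) else 0) := by
        intro j''; exact if_congr (by omega) rfl rfl
      rw [Finset.sum_congr rfl fun j'' _ => this j'',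
          sum_fin_eqc ((j:ℕ)-1) (fun j'' => f (Sum.inr (i', j''))),
          dif_pos (Nat.lt_of_le_of_lt (Nat.sub_le _ _) j.isLt)]


lemma sum_ite_const {i : Fin n} (a b : ℤ) :
    ∑ i' : Fin n, (if i' = i then a else b) = a + ((n:ℤ) - 1) * b := by
  have h : ∀ i' : Fin n, (if i' = i then a else b) = b + (if i' = i then a - b else 0) := by
    intro i'; split <;> ring
  rw [Finset.sum_congr rfl fun i' _ => h i', Finset.sum_add_distrib, Finset.sum_const,
    Finset.sum_ite_eq' Finset.univ i (fun _ => a - b), if_pos (Finset.mem_univ i)]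
  have h2 : (Finset.univ : Finset (Fin n)).card = n := by simp
  rw [h2]
  have hn : 1 ≤ n := Nat.pos_of_ne_zero (by rintro rfl; exact absurd i.isLt (by omega))
  push_cast
  ring

/-- The explicit preimage vector for `m • ε_i`. -/
def hingeF (k n : ℕ) (i : Fin n) : HingeVertex k n → ℤ
  | Sum.inl a => if a = 0 then (k:ℤ) - 1 else 0
  | Sum.inr p => if p.1 = i then ((k:ℤ)+(n:ℤ)-2) * ((p.2:ℤ) - (k:ℤ) + 2)
                 else (k:ℤ) - 2 - (p.2:ℤ)

lemma hingeF_inr (i : Fin n) (i'' : Fin n) (jv : ℕ) (h : jv < k-2) :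
    hingeF k n i (Sum.inr (i'', ⟨jv, h⟩)) =
      if i'' = i then ((k:ℤ)+(n:ℤ)-2) * ((jv:ℤ) - (k:ℤ) + 2) else (k:ℤ) - 2 - (jv:ℤ) := by
  simp [hingeF]

lemma pointDiff_inl0 (hk : 3 ≤ k) (i : Fin n) :
    pointDiff (hu k n) (hv k n i ⟨0, Nat.sub_pos_of_lt hk⟩) (Sum.inl 0) = 1 := by
  simp [pointDiff, hu, hv]

lemma pointDiff_inl1 (hk : 3 ≤ k) (i : Fin n) :
    pointDiff (hu k n) (hv k n i ⟨0, Nat.sub_pos_of_lt hk⟩) (Sum.inl 1) = 0 := by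
  simp [pointDiff, hu, hv]

lemma pointDiff_inr (hk : 3 ≤ k) (i : Fin n) (i'' : Fin n) (j' : Fin (k-2)) :
    pointDiff (hu k n) (hv k n i ⟨0, Nat.sub_pos_of_lt hk⟩) (Sum.inr (i'', j')) =
      -(if i'' = i ∧ (j':ℕ) = 0 then 1 else 0) := by
  simp only [pointDiff, hu, hv]
  erw [if_neg (show ¬ ((Sum.inr (i'', j') : HingeVertex k n) = Sum.inl 0) by simp), zero_sub]
  congr 1
  refine if_congr ?_ rfl rfl
  simp [Prod.ext_iff, Fin.ext_iff, and_comm]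

lemma hinge_forward (hk : 3 ≤ k) (hn : 2 ≤ n) (i : Fin n) :
    (Hinge k n).lapMatrix ℤ *ᵥ hingeF k n i =
      fun v => (((k-1)*(k+n-1) : ℕ) : ℤ) * pointDiff (hu k n) (hv k n i ⟨0, Nat.sub_pos_of_lt hk⟩) v := by
  have hcast : (((k-1)*(k+n-1) : ℕ) : ℤ) = ((k:ℤ)-1)*((k:ℤ)+(n:ℤ)-1) := by
    push_cast [Nat.cast_sub (by omega : 1 ≤ k), Nat.cast_sub (by omega : 1 ≤ k + n)]
    ring
  funext v
  rcases v with a | ⟨i', j⟩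
  · rcases (show a = 0 ∨ a = 1 by revert a; decide) with rfl | rfl
    · rw [lap_apply_u hk, pointDiff_inl0 hk, mul_one, hcast]
      have h1 : ∀ i'' : Fin n,
          hingeF k n i (Sum.inl 0) - hingeF k n i (Sum.inr (i'', ⟨0, Nat.sub_pos_of_lt hk⟩)) =
          if i'' = i then ((k:ℤ)-1) - ((k:ℤ)+(n:ℤ)-2) * (2 - (k:ℤ))
          else ((k:ℤ)-1) - ((k:ℤ)-2) := by
        intro i''
        rw [hingeF_inr, show hingeF k n i (Sum.inl 0) = (k:ℤ)-1 by simp [hingeF]]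
        split <;> push_cast <;> ring
      rw [Finset.sum_congr rfl fun i'' _ => h1 i'', sum_ite_const]
      simp only [hingeF]
      norm_num
      ring
    · rw [lap_apply_w hk, pointDiff_inl1 hk, mul_zero]
      have h1 : ∀ i'' : Fin n,
          hingeF k n i (Sum.inl 1) - hingeF k n i (Sum.inr (i'', ⟨k-3, by omega⟩)) =
          if i'' = i then -(((k:ℤ)+(n:ℤ)-2) * (((k:ℤ)-3) - (k:ℤ) + 2))
          else -((k:ℤ) - 2 - ((k:ℤ)-3)) := by
        intro i''
        rw [hingeF_inr, show hingeF k n i (Sum.inl 1) = 0 by simp [hingeF]]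
        have hc : ((k-3:ℕ):ℤ) = (k:ℤ)-3 := by omega
        rw [hc]
        split <;> ring
      rw [Finset.sum_congr rfl fun i'' _ => h1 i'', sum_ite_const]
      simp only [hingeF]
      norm_num
      ring
  · obtain ⟨jv, hj⟩ := j
    rw [lap_apply_v hk, pointDiff_inr hk]
    have hu0 : hingeF k n i (Sum.inl 0) = (k:ℤ)-1 := by simp [hingeF]
    have hw0 : hingeF k n i (Sum.inl 1) = 0 := by simp [hingeF]
    simp only [hingeF_inr, hu0, hw0, hcast, Fin.val_mk]
    by_cases hj0 : jv = 0
    · subst hj0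
      by_cases hjl : (0:ℕ) = k - 3
      · -- k = 3
        have hk3 : k = 3 := by omega
        subst hk3
        rw [dif_neg (show ¬((0:ℕ)+1 < 3-2) by omega)]
        by_cases hii : i' = i <;> simp [hii] <;> push_cast <;> ring
      · -- k ≥ 4
        rw [dif_pos (show (0:ℕ)+1 < k-2 by omega)]
        by_cases hii : i' = i <;> simp [hii, hjl] <;> push_cast <;> ring
    · by_cases hjl : jv = k - 3
      · rw [dif_neg (show ¬(jv+1 < k-2) by omega)]
        by_cases hii : i' = i <;> simp [hii, hj0, if_pos hjl] <;>
          push_cast [Nat.cast_sub (show 1 ≤ jv by omega)] <;>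
          rw [show ((jv:ℕ):ℤ) = (k:ℤ)-3 by omega] <;> ring
      · rw [dif_pos (show jv+1 < k-2 by omega)]
        by_cases hii : i' = i <;> simp [hii, hj0, hjl] <;>
          push_cast [Nat.cast_sub (show 1 ≤ jv by omega)] <;> ring


lemma hinge_backward (hk : 3 ≤ k) (hn : 2 ≤ n) (i : Fin n) (d : ℕ)
    (x : HingeVertex k n → ℤ)
    (hx : (Hinge k n).lapMatrix ℤ *ᵥ x =
      fun v => (d:ℤ) * pointDiff (hu k n) (hv k n i ⟨0, Nat.sub_pos_of_lt hk⟩) v) :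
    ((k-1)*(k+n-1) : ℕ) ∣ d := by
  have h0 : (0:ℕ) < k - 2 := by omega
  set xu := x (Sum.inl 0) with hxu
  set xw := x (Sum.inl 1) with hxw
  set a : Fin n → ℤ := fun i'' => xu - x (Sum.inr (i'', ⟨0, h0⟩)) with ha
  set c : Fin n → ℤ := fun i'' => if i'' = i then (d:ℤ) else 0 with hc
  have hveq : ∀ (i'' : Fin n) (jv : ℕ) (h : jv < k - 2),
      (if jv = 0 then x (Sum.inr (i'',⟨jv,h⟩)) - xu else 0)
      + (if jv = k - 3 then x (Sum.inr (i'',⟨jv,h⟩)) - xw else 0)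
      + (if h2 : jv+1 < k-2 then
          x (Sum.inr (i'',⟨jv,h⟩)) - x (Sum.inr (i'', ⟨jv+1, h2⟩)) else 0)
      + (if jv ≠ 0 then x (Sum.inr (i'',⟨jv,h⟩)) -
          x (Sum.inr (i'', ⟨jv-1, Nat.lt_of_le_of_lt (Nat.sub_le _ _) h⟩)) else 0)
      = -(if i'' = i ∧ jv = 0 then (d:ℤ) else 0) := by
    intro i'' jv h
    have E := congrFun hx (Sum.inr (i'', ⟨jv, h⟩))
    rw [lap_apply_v hk] at E
    simp only [pointDiff_inr hk, Fin.val_mk, mul_neg, mul_ite, mul_one, mul_zero] at E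
    exact E
  have hlin : ∀ (i'' : Fin n) (jv : ℕ) (h : jv < k - 2),
      xu - x (Sum.inr (i'', ⟨jv, h⟩)) = ((jv:ℤ)+1) * a i'' - (jv:ℤ) * c i'' := by
    intro i'' jv
    induction jv using Nat.strong_induction_on with
    | _ jv IH =>
      intro h
      match jv, h with
      | 0, h =>
        have hval : x (Sum.inr (i'', ⟨0, h⟩)) = x (Sum.inr (i'', ⟨0, h0⟩)) := rfl
        rw [hval]
        simp [ha]
      | (t+1), h =>
        have ht : t < k - 2 := by omega
        have E := hveq i'' t ht
        rw [dif_pos h, if_neg (show ¬ t = k - 3 by omega)] at E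
        by_cases ht0 : t = 0
        · subst ht0
          rw [if_pos rfl, if_neg (show ¬ (0:ℕ) ≠ 0 by omega)] at E
          have hca : (if i'' = i ∧ (0:ℕ) = 0 then (d:ℤ) else 0) = c i'' := by
            simp [hc]
          rw [hca] at E
          have hbase : xu - x (Sum.inr (i'', ⟨0, ht⟩)) = a i'' := rfl
          push_cast
          linear_combination 2 * hbase + E
        · have ht1 : t - 1 < k - 2 := by omega
          rw [if_neg ht0, if_pos ht0,
            if_neg (show ¬ (i'' = i ∧ t = 0) from fun hh => ht0 hh.2)] at E
          have I1 := IH t (by omega) ht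
          have I2 := IH (t-1) (by omega) ht1
          have hc1 : ((t-1:ℕ):ℤ) = (t:ℤ)-1 := by omega
          rw [hc1] at I2
          push_cast
          linear_combination 2 * I1 - I2 + E
  have hS : ∀ i'' : Fin n, xu - xw = ((k:ℤ)-1) * a i'' - ((k:ℤ)-2) * c i'' := by
    intro i''
    have hlast : k - 3 < k - 2 := by omega
    have E := hveq i'' (k-3) hlast
    rw [if_pos rfl, dif_neg (show ¬ (k-3+1 < k-2) by omega)] at E
    by_cases hk3 : k = 3
    · subst hk3
      rw [if_pos rfl, if_neg (show ¬ (3-3:ℕ) ≠ 0 by omega)] at E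
      have hca : (if i'' = i ∧ (3-3:ℕ) = 0 then (d:ℤ) else 0) = c i'' := by
        simp [hc]
      rw [hca] at E
      have hbase : xu - x (Sum.inr (i'', ⟨3-3, hlast⟩)) = a i'' := rfl
      linear_combination 2 * hbase + E
    · rw [if_neg (show ¬ (k-3:ℕ) = 0 by omega), if_pos (show (k-3:ℕ) ≠ 0 by omega),
        if_neg (show ¬ (i'' = i ∧ (k-3:ℕ) = 0) from fun hh => absurd hh.2 (by omega))] at E
      have I1 := hlin i'' (k-3) hlast
      have I2 := hlin i'' (k-3-1) (by omega)
      have e1 : ((k-3:ℕ):ℤ) = (k:ℤ)-3 := by omega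
      have e2 : ((k-3-1:ℕ):ℤ) = (k:ℤ)-4 := by omega
      simp only [e1] at I1
      simp only [e2] at I2
      linear_combination 2 * I1 - I2 + E
  have Eu := congrFun hx (Sum.inl 0)
  rw [lap_apply_u hk] at Eu
  simp only [pointDiff_inl0 hk, mul_one] at Eu
  have hEu : (xu - xw) + ∑ i'' : Fin n, a i'' = (d:ℤ) := Eu
  have hsumc : ∑ i'' : Fin n, c i'' = (d:ℤ) := by
    rw [hc]
    rw [Finset.sum_ite_eq' Finset.univ i (fun _ => (d:ℤ))]
    simp
  have hSsum : (n:ℤ) * (xu - xw) =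
      ((k:ℤ)-1) * (∑ i'' : Fin n, a i'') - ((k:ℤ)-2) * (d:ℤ) := by
    have h1 : ∑ _i'' : Fin n, (xu - xw) =
        ∑ i'' : Fin n, (((k:ℤ)-1) * a i'' - ((k:ℤ)-2) * c i'') :=
      Finset.sum_congr rfl fun i'' _ => hS i''
    rw [Finset.sum_const, Finset.card_univ, Fintype.card_fin, Finset.sum_sub_distrib,
      ← Finset.mul_sum, ← Finset.mul_sum, hsumc] at h1
    rw [← h1, nsmul_eq_mul]
  have hd : (d:ℤ) = ((k:ℤ)+(n:ℤ)-1) * (xu - xw) := by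
    linear_combination -hSsum - ((k:ℤ)-1) * hEu
  obtain ⟨i0, hi0⟩ : ∃ i0 : Fin n, i0 ≠ i := by
    by_cases hh : i = ⟨0, by omega⟩
    · exact ⟨⟨1, by omega⟩, by rw [hh]; simp [Fin.ext_iff]⟩
    · exact ⟨⟨0, by omega⟩, fun hc' => hh (hc' ▸ rfl)⟩
  have hs0 : xu - xw = ((k:ℤ)-1) * a i0 := by
    have := hS i0
    rw [hc] at this
    simp only [if_neg hi0, mul_zero, sub_zero] at this
    exact this
  have hdvd : ((((k-1)*(k+n-1):ℕ)):ℤ) ∣ (d:ℤ) := by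
    refine ⟨a i0, ?_⟩
    have hcast : (((k-1)*(k+n-1) : ℕ) : ℤ) = ((k:ℤ)-1)*((k:ℤ)+(n:ℤ)-1) := by
      push_cast [Nat.cast_sub (by omega : 1 ≤ k), Nat.cast_sub (by omega : 1 ≤ k + n)]
      ring
    rw [hcast, hd, hs0]
    ring
  exact_mod_cast hdvd

lemma class_nsmul_eq_zero_iff {V : Type*} [Fintype V] [DecidableEq V] (G : SimpleGraph V)
    [DecidableRel G.Adj] (D : V → ℤ) (hD : D ∈ Div0 V) (d : ℕ) :
    d • divisorClass G D hD = 0 ↔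
      ∃ x : V → ℤ, G.lapMatrix ℤ *ᵥ x = fun v => (d:ℤ) * D v := by
  unfold divisorClass
  have h1 : d • (QuotientAddGroup.mk (⟨D, hD⟩ : Div0 V) :
      Div0 V ⧸ (Prin G).addSubgroupOf (Div0 V)) =
      QuotientAddGroup.mk (d • (⟨D, hD⟩ : Div0 V)) := by
    induction d with
    | zero => rw [zero_nsmul, zero_nsmul]; rfl
    | succ t IH => rw [succ_nsmul, succ_nsmul, IH]; rfl
  change d • (QuotientAddGroup.mk (⟨D, hD⟩ : Div0 V) :
      Div0 V ⧸ (Prin G).addSubgroupOf (Div0 V)) = 0 ↔ _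
  rw [h1]
  rw [QuotientAddGroup.eq_zero_iff, AddSubgroup.mem_addSubgroupOf]
  have h2 : ((d • (⟨D, hD⟩ : Div0 V) : Div0 V) : V → ℤ) = fun v => (d:ℤ) * D v := by
    funext v
    simp [nsmul_eq_mul]
  rw [h2]
  constructor
  · rintro ⟨x, hxx⟩
    exact ⟨x, by simpa [Matrix.mulVecLin_apply] using hxx⟩
  · rintro ⟨x, hxx⟩
    exact ⟨x, by simpa [Matrix.mulVecLin_apply] using hxx⟩

end HingeAux

/-- For all integers `k ≥ 3`, `n ≥ 2` and any index `i`, the class of the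
divisor `ε_i` (value `1` at `u`, `-1` at `v_{i,1}`, `0` elsewhere) in the critical group
`K(H_{k,n})` has additive order exactly `(k-1) * (k+n-1)`. -/
theorem hinge_epsilon_addOrderOf (k n : ℕ) (hk : 3 ≤ k) (hn : 2 ≤ n) (i : Fin n) :
    addOrderOf (divisorClass (Hinge k n)
      (pointDiff (hu k n) (hv k n i ⟨0, by omega⟩))
      (pointDiff_mem _ _)) = (k - 1) * (k + n - 1) := by
  set g := divisorClass (Hinge k n)
      (pointDiff (hu k n) (hv k n i ⟨0, by omega⟩)) (pointDiff_mem _ _) with hg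
  have key : ∀ d : ℕ, d • g = 0 ↔
      ∃ x : HingeVertex k n → ℤ, Matrix.mulVec ((Hinge k n).lapMatrix ℤ) x =
        fun v => (d:ℤ) * pointDiff (hu k n) (hv k n i ⟨0, by omega⟩) v := fun d =>
    class_nsmul_eq_zero_iff (Hinge k n) _ _ d
  have hm0 : 0 < (k - 1) * (k + n - 1) := by
    have : 0 < k - 1 := by omega
    have : 0 < k + n - 1 := by omega
    positivity
  have h1 : ((k - 1) * (k + n - 1)) • g = 0 := by
    refine (key _).mpr ⟨hingeF k n i, ?_⟩
    have := hinge_forward hk hn i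
    convert this using 2
  have h2 : addOrderOf g ∣ (k - 1) * (k + n - 1) := addOrderOf_dvd_of_nsmul_eq_zero h1
  have h3 : (k - 1) * (k + n - 1) ∣ addOrderOf g := by
    obtain ⟨x, hxx⟩ := (key (addOrderOf g)).mp (addOrderOf_nsmul_eq_zero g)
    exact hinge_backward hk hn i _ x hxx
  exact Nat.dvd_antisymm h2 h3
end
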